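/- The subgroup K = {(a, b√3; c√3, d) ∈ G : c ≡ 0 (mod 2)} has index 3 in G. (This is the index |G₃ : G₃ ∩ G₃^{M_2}| for the degree-2 modular equation in signature 3.) -/

import Mathlib

/-- The subgroup of `SL(2, ℝ)` of matrices of the form `(a, b√3; c√3, d)` with
`a, b, c, d ∈ ℤ`, `ad − 3bc = 1` and `m ∣ c`. -/
def sqrt3Group (m : ℤ) : Subgroup (Matrix.SpecialLinearGroup (Fin 2) ℝ) where
  carrier := {A | ∃ a b c d : ℤ, (A : Matrix (Fin 2) (Fin 2) ℝ) =
      !![(a:ℝ), (b:ℝ) * Real.sqrt 3; (c:ℝ) * Real.sqrt 3, (d:ℝ)] ∧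
      a * d - 3 * b * c = 1 ∧ m ∣ c}
  one_mem' := by
    refine ⟨1, 0, 0, 1, ?_, by ring, dvd_zero m⟩
    rw [Matrix.SpecialLinearGroup.coe_one, Matrix.one_fin_two]
    norm_num
  mul_mem' := by
    rintro A B ⟨a₁, b₁, c₁, d₁, hA, hdA, hcA⟩ ⟨a₂, b₂, c₂, d₂, hB, hdB, hcB⟩
    have h3 : Real.sqrt 3 * Real.sqrt 3 = 3 := Real.mul_self_sqrt (by norm_num)
    refine ⟨a₁ * a₂ + 3 * b₁ * c₂, a₁ * b₂ + b₁ * d₂, c₁ * a₂ + d₁ * c₂,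
      3 * c₁ * b₂ + d₁ * d₂, ?_, ?_, ?_⟩
    · rw [Matrix.SpecialLinearGroup.coe_mul, hA, hB, Matrix.mul_fin_two]
      ext i j
      fin_cases i <;> fin_cases j <;> push_cast <;> simp
      · linear_combination ((b₁ : ℝ) * (c₂ : ℝ)) * h3
      · ring
      · ring
      · linear_combination ((c₁ : ℝ) * (b₂ : ℝ)) * h3
    · linear_combination (a₂ * d₂ - 3 * b₂ * c₂) * hdA + hdB
    · exact dvd_add (hcA.mul_right _) (hcB.mul_left _)
  inv_mem' := by
    rintro A ⟨a, b, c, d, hA, hdA, hcA⟩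
    refine ⟨d, -b, -c, a, ?_, by linear_combination hdA, dvd_neg.mpr hcA⟩
    rw [Matrix.SpecialLinearGroup.coe_inv, hA, Matrix.adjugate_fin_two]
    ext i j
    fin_cases i <;> fin_cases j <;> push_cast <;> simp

noncomputable section IndexAux

abbrev SL2R := Matrix.SpecialLinearGroup (Fin 2) ℝ

lemma sqrt3_ne_zero : Real.sqrt 3 ≠ 0 := by positivity

lemma sqrt3_mul_self : Real.sqrt 3 * Real.sqrt 3 = 3 := Real.mul_self_sqrt (by norm_num)

noncomputable def cInt (A : SL2R) : ℤ := ⌊(A : Matrix (Fin 2) (Fin 2) ℝ) 1 0 / Real.sqrt 3⌋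
noncomputable def aInt (A : SL2R) : ℤ := ⌊(A : Matrix (Fin 2) (Fin 2) ℝ) 0 0⌋

lemma cInt_spec {A : SL2R} {a b c d : ℤ}
    (hA : (A : Matrix (Fin 2) (Fin 2) ℝ) =
      !![(a:ℝ), (b:ℝ) * Real.sqrt 3; (c:ℝ) * Real.sqrt 3, (d:ℝ)]) : cInt A = c := by
  unfold cInt
  rw [hA]
  simp [mul_div_cancel_right₀ _ sqrt3_ne_zero]

lemma aInt_spec {A : SL2R} {a b c d : ℤ}
    (hA : (A : Matrix (Fin 2) (Fin 2) ℝ) =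
      !![(a:ℝ), (b:ℝ) * Real.sqrt 3; (c:ℝ) * Real.sqrt 3, (d:ℝ)]) : aInt A = a := by
  unfold aInt
  rw [hA]
  simp

lemma inv_mul_data {A B : SL2R} {a₁ b₁ c₁ d₁ a₂ b₂ c₂ d₂ : ℤ}
    (hA : (A : Matrix (Fin 2) (Fin 2) ℝ) =
      !![(a₁:ℝ), (b₁:ℝ) * Real.sqrt 3; (c₁:ℝ) * Real.sqrt 3, (d₁:ℝ)])
    (hB : (B : Matrix (Fin 2) (Fin 2) ℝ) =
      !![(a₂:ℝ), (b₂:ℝ) * Real.sqrt 3; (c₂:ℝ) * Real.sqrt 3, (d₂:ℝ)]) :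
    ((A⁻¹ * B : SL2R) : Matrix (Fin 2) (Fin 2) ℝ) =
      !![((d₁*a₂ - 3*b₁*c₂ : ℤ):ℝ), ((d₁*b₂ - b₁*d₂ : ℤ):ℝ) * Real.sqrt 3;
         ((a₁*c₂ - c₁*a₂ : ℤ):ℝ) * Real.sqrt 3, ((a₁*d₂ - 3*c₁*b₂ : ℤ):ℝ)] := by
  have h3 := sqrt3_mul_self
  rw [Matrix.SpecialLinearGroup.coe_mul, Matrix.SpecialLinearGroup.coe_inv, hA,
    Matrix.adjugate_fin_two, hB, Matrix.mul_fin_two]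
  ext i j
  fin_cases i <;> fin_cases j <;> push_cast <;> simp
  · linear_combination (-(b₁:ℝ) * c₂) * h3
  · ring
  · ring
  · linear_combination (-(c₁:ℝ) * b₂) * h3

/-- membership criterion -/
lemma inv_mul_mem_iff {A B : SL2R} {a₁ b₁ c₁ d₁ a₂ b₂ c₂ d₂ : ℤ}
    (hA : (A : Matrix (Fin 2) (Fin 2) ℝ) =
      !![(a₁:ℝ), (b₁:ℝ) * Real.sqrt 3; (c₁:ℝ) * Real.sqrt 3, (d₁:ℝ)])
    (hB : (B : Matrix (Fin 2) (Fin 2) ℝ) =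
      !![(a₂:ℝ), (b₂:ℝ) * Real.sqrt 3; (c₂:ℝ) * Real.sqrt 3, (d₂:ℝ)])
    (hdA : a₁ * d₁ - 3 * b₁ * c₁ = 1) (hdB : a₂ * d₂ - 3 * b₂ * c₂ = 1) :
    A⁻¹ * B ∈ sqrt3Group 2 ↔ (2:ℤ) ∣ (a₁ * c₂ - c₁ * a₂) := by
  constructor
  · rintro ⟨a, b, c, d, hM, _, hc⟩
    have h1 := cInt_spec hM
    have h2 := cInt_spec (inv_mul_data hA hB)
    rw [h1] at h2
    rwa [h2] at hc
  · intro h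
    exact ⟨_, _, _, _, inv_mul_data hA hB,
      by linear_combination d₂ * a₂ * hdA + hdB - (3*b₂*c₂) * hdA
        + (a₁*d₁ - 3*b₁*c₁ - 1) * (a₂*d₂ - 3*b₂*c₂ - 1), h⟩

lemma not_both_even {a b c d : ℤ} (h : a * d - 3 * b * c = 1) :
    ¬ (a % 2 = 0 ∧ c % 2 = 0) := by
  rintro ⟨ha, hc⟩
  have h2 : (2:ℤ) ∣ a * d - 3 * b * c :=
    dvd_sub ((Int.dvd_of_emod_eq_zero ha).mul_right d)
      ((Int.dvd_of_emod_eq_zero hc).mul_left (3 * b))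
  rw [h] at h2
  norm_num at h2

def cls (a c : ℤ) : Fin 3 := if c % 2 = 0 then 0 else if a % 2 = 0 then 1 else 2

lemma cls_eq_iff {a₁ c₁ a₂ c₂ : ℤ} (h1 : ¬ (a₁ % 2 = 0 ∧ c₁ % 2 = 0))
    (h2 : ¬ (a₂ % 2 = 0 ∧ c₂ % 2 = 0)) :
    cls a₁ c₁ = cls a₂ c₂ ↔ (2:ℤ) ∣ (a₁ * c₂ - c₁ * a₂) := by
  have key : (a₁ * c₂ - c₁ * a₂) % 2 = ((a₁%2) * (c₂%2) - (c₁%2) * (a₂%2)) % 2 := by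
    conv_lhs => rw [Int.sub_emod, Int.mul_emod, Int.mul_emod c₁]
    conv_rhs => rw [Int.sub_emod, Int.mul_emod, Int.mul_emod (c₁ % 2)]
    simp [Int.emod_emod_of_dvd]
  have e1 := Int.emod_two_eq a₁
  have e2 := Int.emod_two_eq c₁
  have e3 := Int.emod_two_eq a₂
  have e4 := Int.emod_two_eq c₂
  unfold cls
  rw [Int.dvd_iff_emod_eq_zero, key]
  rcases e1 with h|h <;> rcases e2 with h'|h' <;> rcases e3 with h''|h'' <;>
    rcases e4 with h'''|h''' <;>
    rw [h, h', h'', h'''] <;> (first | decide | simp_all)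


section Final

open Matrix

lemma one_data : ((1 : SL2R) : Matrix (Fin 2) (Fin 2) ℝ) =
    !![((1:ℤ):ℝ), ((0:ℤ):ℝ) * Real.sqrt 3; ((0:ℤ):ℝ) * Real.sqrt 3, ((1:ℤ):ℝ)] := by
  rw [Matrix.SpecialLinearGroup.coe_one, Matrix.one_fin_two]
  norm_num

noncomputable def g1 : SL2R :=
  ⟨!![2, Real.sqrt 3; Real.sqrt 3, 2], by
    rw [Matrix.det_fin_two_of]
    rw [sqrt3_mul_self]
    norm_num⟩

lemma g1_data : ((g1 : SL2R) : Matrix (Fin 2) (Fin 2) ℝ) =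
    !![((2:ℤ):ℝ), ((1:ℤ):ℝ) * Real.sqrt 3; ((1:ℤ):ℝ) * Real.sqrt 3, ((2:ℤ):ℝ)] := by
  show !![2, Real.sqrt 3; Real.sqrt 3, 2] = _
  norm_num

noncomputable def g2 : SL2R :=
  ⟨!![1, 0; Real.sqrt 3, 1], by
    rw [Matrix.det_fin_two_of]
    norm_num⟩

lemma g2_data : ((g2 : SL2R) : Matrix (Fin 2) (Fin 2) ℝ) =
    !![((1:ℤ):ℝ), ((0:ℤ):ℝ) * Real.sqrt 3; ((1:ℤ):ℝ) * Real.sqrt 3, ((1:ℤ):ℝ)] := by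
  show !![1, 0; Real.sqrt 3, 1] = _
  norm_num

lemma one_mem_G : (1 : SL2R) ∈ sqrt3Group 1 := one_mem _

lemma g1_mem_G : g1 ∈ sqrt3Group 1 := ⟨2, 1, 1, 2, g1_data, by norm_num, one_dvd _⟩

lemma g2_mem_G : g2 ∈ sqrt3Group 1 := ⟨1, 0, 1, 1, g2_data, by norm_num, one_dvd _⟩

theorem index_K_in_G3_M2_eq_three_aux :
    ((sqrt3Group 2).relIndex (sqrt3Group 1)) = 3 := by
  show ((sqrt3Group 2).subgroupOf (sqrt3Group 1)).index = 3
  rw [Subgroup.index_eq_card]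
  set G := sqrt3Group 1 with hG
  set K := (sqrt3Group 2).subgroupOf G with hK
  -- the invariant
  have hF : ∀ (A B : G), (QuotientGroup.leftRel K) A B →
      cls (aInt (A : SL2R)) (cInt (A : SL2R)) = cls (aInt (B : SL2R)) (cInt (B : SL2R)) := by
    intro A B hAB
    rw [QuotientGroup.leftRel_apply, hK, Subgroup.mem_subgroupOf] at hAB
    obtain ⟨a₁, b₁, c₁, d₁, hA, hdA, -⟩ := A.2
    obtain ⟨a₂, b₂, c₂, d₂, hB, hdB, -⟩ := B.2
    have hAB' : (A : SL2R)⁻¹ * (B : SL2R) ∈ sqrt3Group 2 := by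
      simpa using hAB
    rw [aInt_spec hA, cInt_spec hA, aInt_spec hB, cInt_spec hB]
    rw [cls_eq_iff (not_both_even hdA) (not_both_even hdB)]
    exact (inv_mul_mem_iff hA hB hdA hdB).mp hAB'
  let Fbar : (G ⧸ K) → Fin 3 :=
    Quotient.lift (fun A : G => cls (aInt (A : SL2R)) (cInt (A : SL2R))) hF
  have hbij : Function.Bijective Fbar := by
    constructor
    · intro x y
      refine Quotient.inductionOn₂ x y ?_
      intro A B hfeq
      obtain ⟨a₁, b₁, c₁, d₁, hA, hdA, -⟩ := A.2
      obtain ⟨a₂, b₂, c₂, d₂, hB, hdB, -⟩ := B.2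
      have hfeq' : cls a₁ c₁ = cls a₂ c₂ := by
        have : cls (aInt (A : SL2R)) (cInt (A : SL2R)) =
            cls (aInt (B : SL2R)) (cInt (B : SL2R)) := hfeq
        rwa [aInt_spec hA, cInt_spec hA, aInt_spec hB, cInt_spec hB] at this
      apply Quotient.sound
      refine QuotientGroup.leftRel_apply.mpr ?_
      rw [hK, Subgroup.mem_subgroupOf]
      have : (A : SL2R)⁻¹ * (B : SL2R) ∈ sqrt3Group 2 := by
        rw [inv_mul_mem_iff hA hB hdA hdB]
        rw [← cls_eq_iff (not_both_even hdA) (not_both_even hdB)]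
        exact hfeq'
      simpa using this
    · intro j
      fin_cases j
      · refine ⟨Quotient.mk _ (⟨1, one_mem_G⟩ : G), ?_⟩
        show cls (aInt (1 : SL2R)) (cInt (1 : SL2R)) = _
        rw [aInt_spec one_data, cInt_spec one_data]
        decide
      · refine ⟨Quotient.mk _ (⟨g1, g1_mem_G⟩ : G), ?_⟩
        show cls (aInt g1) (cInt g1) = _
        rw [aInt_spec g1_data, cInt_spec g1_data]
        decide
      · refine ⟨Quotient.mk _ (⟨g2, g2_mem_G⟩ : G), ?_⟩
        show cls (aInt g2) (cInt g2) = _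
        rw [aInt_spec g2_data, cInt_spec g2_data]
        decide
  rw [Nat.card_eq_of_bijective Fbar hbij]
  simp

end Final

end IndexAux

/-- The subgroup `K = {(a, b√3; c√3, d) ∈ G : 2 ∣ c}` (which equals `G ∩ D₂⁻¹GD₂` with
`D₂ = diag(2,1)`) has index 3 in `G = sqrt3Group 1`, the group of all matrices
`(a, b√3; c√3, d)` with `a, b, c, d ∈ ℤ` and `ad − 3bc = 1`. -/
theorem index_K_in_G3_M2_eq_three :
    ((sqrt3Group 2).relIndex (sqrt3Group 1)) = 3 :=
  index_K_in_G3_M2_eq_three_aux
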